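/- A non-dictatorial generalized median voter scheme f^p on the universal domain over X = {a,...,b} is not obviously manipulable if and only if for every agent i, p_{N\{i}} ∈ {a, a+1} and p_{{i}} ∈ {b−1, b}. -/
import Mathlib


/-- A preference profile: each agent `i : Fin n` has a strict preference,
modeled as a linear order on the set of alternatives `X`. -/
abbrev Profile (n : ℕ) (X : Type*) := Fin n → LinearOrder X

/-- The top (best) alternative of a preference `L`. -/
noncomputable def top {X : Type*} [Fintype X] [Nonempty X] (L : LinearOrder X) : X :=
  @Finset.max' X L Finset.univ Finset.univ_nonempty

/-- `x` is strictly preferred to `y` according to `L`. -/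
def prefers {X : Type*} (L : LinearOrder X) (x y : X) : Prop := L.lt y x

/-- The option set left open by preference `L` of agent `i` at rule `f`. -/
def OptionSet {n : ℕ} {X : Type*} (f : Profile n X → X) (i : Fin n) (L : LinearOrder X) :
    Set X :=
  {x | ∃ P : Profile n X, P i = L ∧ f P = x}

/-- `Li'` is a profitable manipulation of `f` at (true preference) `Li` for agent `i`. -/
def IsManip {n : ℕ} {X : Type*} (f : Profile n X → X) (i : Fin n)
    (Li Li' : LinearOrder X) : Prop :=
  ∃ P : Profile n X, P i = Li ∧ prefers Li (f (Function.update P i Li')) (f P)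

/-- The worst element of `O(Li')` is strictly `Li`-preferred to the worst element of `O(Li)`.
For nonempty finite option sets this is equivalent to: some element of `O(Li)` is strictly
worse (w.r.t. `Li`) than every element of `O(Li')`. -/
def WorstImproves {n : ℕ} {X : Type*} (f : Profile n X → X) (i : Fin n)
    (Li Li' : LinearOrder X) : Prop :=
  ∃ w ∈ OptionSet f i Li, ∀ w' ∈ OptionSet f i Li', prefers Li w' w

/-- The best element of `O(Li')` is strictly `Li`-preferred to the best element of `O(Li)`.
For nonempty finite option sets this is equivalent to: some element of `O(Li')` is strictly
better (w.r.t. `Li`) than every element of `O(Li)`. -/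
def BestImproves {n : ℕ} {X : Type*} (f : Profile n X → X) (i : Fin n)
    (Li Li' : LinearOrder X) : Prop :=
  ∃ b' ∈ OptionSet f i Li', ∀ b ∈ OptionSet f i Li, prefers Li b' b

/-- `Li'` is an obvious manipulation of `f` at `Li` for agent `i`. -/
def IsObviousManip {n : ℕ} {X : Type*} (f : Profile n X → X) (i : Fin n)
    (Li Li' : LinearOrder X) : Prop :=
  IsManip f i Li Li' ∧ (WorstImproves f i Li Li' ∨ BestImproves f i Li Li')

/-- `f` is not obviously manipulable. -/
def NOM {n : ℕ} {X : Type*} (f : Profile n X → X) : Prop :=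
  ∀ (i : Fin n) (Li Li' : LinearOrder X), ¬ IsObviousManip f i Li Li'

/-- `f` is tops-only. -/
def TopsOnly {n : ℕ} {X : Type*} [Fintype X] [Nonempty X] (f : Profile n X → X) : Prop :=
  ∀ P P' : Profile n X, (∀ i, top (P i) = top (P' i)) → f P = f P'

/-- The set `V_i` of alternatives that agent `i` vetoes via some preference. -/
def VetoSet {n : ℕ} {X : Type*} (f : Profile n X → X) (i : Fin n) : Set X :=
  {x | ∃ L : LinearOrder X, x ∉ OptionSet f i L}

/-- The set `SV_i` of alternatives strongly vetoed by agent `i`: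
`x` is vetoed via `L` precisely when the top of `L` differs from `x`. -/
def StrongVetoSet {n : ℕ} {X : Type*} [Fintype X] [Nonempty X]
    (f : Profile n X → X) (i : Fin n) : Set X :=
  {x | ∀ L : LinearOrder X, x ∉ OptionSet f i L ↔ top L ≠ x}

/-- `f` is dictatorial: some agent's top alternative is always selected. -/
def Dictatorial {n : ℕ} {X : Type*} [Fintype X] [Nonempty X]
    (f : Profile n X → X) : Prop :=
  ∃ i : Fin n, ∀ P : Profile n X, f P = top (P i)

/-- The ordered set of alternatives `X = {a, a+1, ..., b} ⊆ ℕ`. -/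
abbrev Alt (a b : ℕ) : Type := {x : ℕ // x ∈ Finset.Icc a b}

/-- `p` is a monotonic family of fixed ballots: `p_N = a`, `p_∅ = b`, and
`S ⊆ T` implies `p_T ≤ p_S`. -/
def MonotonicFamily {n a b : ℕ} (p : Finset (Fin n) → Alt a b) : Prop :=
  (p Finset.univ).val = a ∧ (p ∅).val = b ∧
    ∀ S T : Finset (Fin n), S ⊆ T → p T ≤ p S

/-- The generalized median voter scheme associated with the family `p`:
`f^p(P) = min_{S ⊆ N} max_{j ∈ S} {t(P_j), p_S}`. -/
noncomputable def gms {n a b : ℕ} [Nonempty (Alt a b)]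
    (p : Finset (Fin n) → Alt a b) (P : Profile n (Alt a b)) : Alt a b :=
  Finset.univ.inf' ⟨∅, Finset.mem_univ _⟩ fun S : Finset (Fin n) =>
    (insert (p S) (S.image fun j => top (P j))).max' (Finset.insert_nonempty _ _)

section H
variable {X : Type*}

lemma le_top_all [Fintype X] [Nonempty X] (L : LinearOrder X) (x : X) :
    L.le x (top L) := by
  letI := L
  exact Finset.le_max' _ x (Finset.mem_univ x)

lemma top_unique' [Fintype X] [Nonempty X] (L : LinearOrder X) (t : X)
    (h : ∀ x, L.le x t) : top L = t := by
  letI := L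
  exact le_antisymm (Finset.max'_le _ _ _ fun x _ => h x)
    (Finset.le_max' _ t (Finset.mem_univ t))

lemma lt_le_absurd (L : LinearOrder X) {x y : X} (h : L.lt x y) (h' : L.le y x) : False := by
  letI := L
  exact absurd h (not_lt_of_ge h')

lemma lt_irrefl' (L : LinearOrder X) (x : X) : ¬ L.lt x x := by
  letI := L; exact lt_irrefl x

end H

section A
variable {a b : ℕ}

lemma alt_ge (x : Alt a b) : a ≤ x.val := (Finset.mem_Icc.mp x.2).1
lemma alt_le (x : Alt a b) : x.val ≤ b := (Finset.mem_Icc.mp x.2).2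
lemma alt_le_iff {x y : Alt a b} : x ≤ y ↔ x.val ≤ y.val := Iff.rfl
lemma alt_ext {x y : Alt a b} (h : x.val = y.val) : x = y := Subtype.ext h

def eFun (t w x : Alt a b) : ℕ := if x = t then 2*b+2 else if x = w then 0 else x.val + 1

lemma eFun_inj (t w : Alt a b) : Function.Injective (eFun t w) := by
  intro x y h
  have hx := alt_le x; have hy := alt_le y
  unfold eFun at h
  by_cases h1 : x = t
  · by_cases h2 : y = t
    · rw [h1, h2]
    · rw [if_pos h1, if_neg h2] at h
      by_cases h4 : y = w
      · rw [if_pos h4] at h; omega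
      · rw [if_neg h4] at h; omega
  · by_cases h2 : y = t
    · rw [if_neg h1, if_pos h2] at h
      by_cases h3 : x = w
      · rw [if_pos h3] at h; omega
      · rw [if_neg h3] at h; omega
    · rw [if_neg h1, if_neg h2] at h
      by_cases h3 : x = w
      · by_cases h4 : y = w
        · rw [h3, h4]
        · rw [if_pos h3, if_neg h4] at h; omega
      · by_cases h4 : y = w
        · rw [if_neg h3, if_pos h4] at h; omega
        · rw [if_neg h3, if_neg h4] at h; exact alt_ext (by omega)

noncomputable def mkL (t w : Alt a b) : LinearOrder (Alt a b) :=
  LinearOrder.lift' (eFun t w) (eFun_inj t w)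

lemma mkL_le_iff {t w x y : Alt a b} : (mkL t w).le x y ↔ eFun t w x ≤ eFun t w y := Iff.rfl
lemma mkL_lt_iff {t w x y : Alt a b} : (mkL t w).lt x y ↔ eFun t w x < eFun t w y := Iff.rfl

lemma eFun_le_top (t w x : Alt a b) : eFun t w x ≤ 2*b+2 := by
  have := alt_le x
  unfold eFun; split_ifs <;> omega

lemma top_mkL [Nonempty (Alt a b)] (t w : Alt a b) : top (mkL t w) = t := by
  apply top_unique'
  intro x
  rw [mkL_le_iff]
  have h := eFun_le_top t w x
  have : eFun t w t = 2*b+2 := by unfold eFun; rw [if_pos rfl]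
  omega

lemma mkL_bot_lt {t w x : Alt a b} (hwt : w ≠ t) (hx : x ≠ w) : (mkL t w).lt w x := by
  rw [mkL_lt_iff]
  have : eFun t w w = 0 := by unfold eFun; rw [if_neg hwt, if_pos rfl]
  rw [this]
  unfold eFun
  split_ifs <;> omega

end A

set_option linter.unusedSectionVars false
section G
variable {n a b : ℕ} [Nonempty (Alt a b)]

noncomputable def gterm (p : Finset (Fin n) → Alt a b) (P : Profile n (Alt a b))
    (S : Finset (Fin n)) : Alt a b :=
  (insert (p S) (S.image fun j => top (P j))).max' (Finset.insert_nonempty _ _)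

lemma gms_le_gterm (p : Finset (Fin n) → Alt a b) (P : Profile n (Alt a b))
    (S : Finset (Fin n)) : gms p P ≤ gterm p P S :=
  Finset.inf'_le _ (Finset.mem_univ S)

lemma gterm_le {p : Finset (Fin n) → Alt a b} {P : Profile n (Alt a b)}
    {S : Finset (Fin n)} {c : Alt a b}
    (h1 : p S ≤ c) (h2 : ∀ j ∈ S, top (P j) ≤ c) : gterm p P S ≤ c := by
  apply Finset.max'_le
  intro x hx
  rcases Finset.mem_insert.mp hx with h | h
  · exact h ▸ h1
  · obtain ⟨j, hj, rfl⟩ := Finset.mem_image.mp h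
    exact h2 j hj

lemma le_gms {p : Finset (Fin n) → Alt a b} {P : Profile n (Alt a b)} {c : Alt a b}
    (h : ∀ S : Finset (Fin n), c ≤ p S ∨ ∃ j ∈ S, c ≤ top (P j)) : c ≤ gms p P := by
  apply Finset.le_inf'
  intro S _
  rcases h S with h' | ⟨j, hj, h'⟩
  · exact le_trans h' (Finset.le_max' _ _ (Finset.mem_insert_self _ _))
  · exact le_trans h' (Finset.le_max' _ (top (P j))
      (Finset.mem_insert_of_mem (Finset.mem_image_of_mem (fun j => top (P j)) hj)))

lemma exists_gms_eq (p : Finset (Fin n) → Alt a b) (P : Profile n (Alt a b)) :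
    ∃ S : Finset (Fin n), gms p P = gterm p P S := by
  obtain ⟨S, _, hS⟩ := Finset.exists_mem_eq_inf'
    (s := (Finset.univ : Finset (Finset (Fin n))))
    (⟨∅, Finset.mem_univ _⟩) (gterm p P)
  exact ⟨S, hS⟩

lemma gms_lower2 {p : Finset (Fin n) → Alt a b}
    (hmono : ∀ S T : Finset (Fin n), S ⊆ T → p T ≤ p S)
    (P : Profile n (Alt a b)) (i : Fin n) :
    p (Finset.univ.erase i) ≤ gms p P ∨ top (P i) ≤ gms p P := by
  obtain ⟨S, hS⟩ := exists_gms_eq p P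
  by_cases hi : i ∈ S
  · right
    rw [hS]
    exact Finset.le_max' _ (top (P i))
      (Finset.mem_insert_of_mem (Finset.mem_image_of_mem (fun j => top (P j)) hi))
  · left
    rw [hS]
    have hsub : S ⊆ Finset.univ.erase i := by
      intro j hj
      exact Finset.mem_erase.mpr ⟨fun h => hi (h ▸ hj), Finset.mem_univ j⟩
    exact le_trans (hmono S _ hsub) (Finset.le_max' _ _ (Finset.mem_insert_self _ _))

lemma gms_upper2 (p : Finset (Fin n) → Alt a b) (P : Profile n (Alt a b)) (i : Fin n) :
    gms p P ≤ p {i} ∨ gms p P ≤ top (P i) := by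
  have h := Finset.max'_mem _ (Finset.insert_nonempty (p {i})
    (({i} : Finset (Fin n)).image fun j => top (P j)))
  rcases Finset.mem_insert.mp h with h' | h'
  · left; rw [← h']; exact gms_le_gterm p P {i}
  · right
    rw [Finset.image_singleton, Finset.mem_singleton] at h'
    rw [← h']; exact gms_le_gterm p P {i}

noncomputable def twoTop (i : Fin n) (L : LinearOrder (Alt a b)) (c : Alt a b) :
    Profile n (Alt a b) := fun j => if j = i then L else mkL c c

lemma twoTop_same {i : Fin n} {L : LinearOrder (Alt a b)} {c : Alt a b} :
    twoTop i L c i = L := if_pos rfl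

lemma twoTop_top_ne {i j : Fin n} {L : LinearOrder (Alt a b)} {c : Alt a b} (h : j ≠ i) :
    top (twoTop i L c j) = c := by
  unfold twoTop; rw [if_neg h, top_mkL]

lemma twoTop_top_same {i : Fin n} {L : LinearOrder (Alt a b)} {c : Alt a b} :
    top (twoTop i L c i) = top L := by rw [twoTop_same]

lemma update_twoTop {i : Fin n} {L L' : LinearOrder (Alt a b)} {c : Alt a b} :
    Function.update (twoTop i L c) i L' = twoTop i L' c := by
  funext j
  by_cases h : j = i
  · subst h; rw [Function.update_self, twoTop_same]
  · rw [Function.update_of_ne h]; unfold twoTop; rw [if_neg h, if_neg h]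

lemma subset_erase_of_notMem {S : Finset (Fin n)} {i : Fin n} (hi : i ∉ S) :
    S ⊆ Finset.univ.erase i := fun j hj =>
  Finset.mem_erase.mpr ⟨fun h => hi (h ▸ hj), Finset.mem_univ j⟩

/-- realization: any `c` with `p_{N\i} ≤ c ≤ p_{i}` is in every option set of agent i -/
lemma mem_option {p : Finset (Fin n) → Alt a b} (hp : MonotonicFamily p)
    (i : Fin n) (L' : LinearOrder (Alt a b)) (c : Alt a b)
    (hq : (p (Finset.univ.erase i)).val ≤ c.val) (hr : c.val ≤ (p {i}).val) :
    c ∈ OptionSet (gms p) i L' := by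
  refine ⟨twoTop i L' c, twoTop_same, le_antisymm ?_ ?_⟩
  · refine le_trans (gms_le_gterm p _ (Finset.univ.erase i)) (gterm_le (alt_le_iff.mpr hq) ?_)
    intro j hj
    rw [twoTop_top_ne (Finset.mem_erase.mp hj).1]
  · apply le_gms
    intro S
    by_cases hS : S ⊆ {i}
    · rcases Finset.subset_singleton_iff.mp hS with rfl | rfl
      · left; exact alt_le_iff.mpr (le_trans (alt_le c) (le_of_eq hp.2.1.symm))
      · left; exact alt_le_iff.mpr hr
    · obtain ⟨j, hj, hji⟩ := Finset.not_subset.mp hS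
      rw [Finset.mem_singleton] at hji
      exact Or.inr ⟨j, hj, le_of_eq (twoTop_top_ne hji).symm⟩

lemma top_mem_option {p : Finset (Fin n) → Alt a b} (hp : MonotonicFamily p)
    (i : Fin n) (L : LinearOrder (Alt a b)) :
    top L ∈ OptionSet (gms p) i L := by
  refine ⟨fun _ => L, rfl, le_antisymm ?_ ?_⟩
  · refine le_trans (gms_le_gterm p _ Finset.univ) (gterm_le ?_ ?_)
    · exact alt_le_iff.mpr (le_trans (le_of_eq hp.1) (alt_ge (top L)))
    · intro j _; exact le_refl _
  · apply le_gms
    intro S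
    rcases S.eq_empty_or_nonempty with rfl | ⟨j, hj⟩
    · left; exact alt_le_iff.mpr (le_trans (alt_le (top L)) (le_of_eq hp.2.1.symm))
    · exact Or.inr ⟨j, hj, le_refl _⟩

lemma dict_of_extreme {p : Finset (Fin n) → Alt a b} (hp : MonotonicFamily p) (i : Fin n)
    (hq : (p (Finset.univ.erase i)).val = b) (hr : (p {i}).val = a) :
    Dictatorial (gms p) := by
  refine ⟨i, fun P => ?_⟩
  have h1 := gms_lower2 hp.2.2 P i
  have h2 := gms_upper2 p P i
  have hb := alt_le (gms p P); have ha := alt_ge (gms p P)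
  have htb := alt_le (top (P i)); have hta := alt_ge (top (P i))
  apply alt_ext
  rw [alt_le_iff, alt_le_iff] at h1 h2
  omega

end G

section C
variable {n a b : ℕ} [Nonempty (Alt a b)]

lemma consA {p : Finset (Fin n) → Alt a b} (hp : MonotonicFamily p) (hab : a < b)
    (i : Fin n) (hq : a + 2 ≤ (p (Finset.univ.erase i)).val)
    (hr : a + 1 ≤ (p {i}).val) (hNOM : NOM (gms p)) : False := by
  obtain ⟨aA, haA⟩ : ∃ x : Alt a b, x.val = a :=
    ⟨⟨a, Finset.mem_Icc.mpr (by omega)⟩, rfl⟩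
  obtain ⟨a1, ha1⟩ : ∃ x : Alt a b, x.val = a + 1 :=
    ⟨⟨a + 1, Finset.mem_Icc.mpr (by omega)⟩, rfl⟩
  have hpu := hp.1
  have hpe := hp.2.1
  have hq' := alt_ge (p (Finset.univ.erase i))
  have hne1 : a1 ≠ aA := fun h => by rw [h] at ha1; omega
  -- value of the truthful profile
  have hfP : gms p (twoTop i (mkL aA a1) a1) = a1 := by
    apply le_antisymm
    · refine le_trans (gms_le_gterm p _ Finset.univ) (gterm_le (alt_le_iff.mpr (by omega)) ?_)
      intro j _
      by_cases hji : j = i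
      · subst hji
        rw [twoTop_top_same, top_mkL]
        exact alt_le_iff.mpr (by omega)
      · rw [twoTop_top_ne hji]
    · apply le_gms
      intro S
      by_cases hS : S ⊆ {i}
      · rcases Finset.subset_singleton_iff.mp hS with rfl | rfl
        · left; exact alt_le_iff.mpr (by omega)
        · left; exact alt_le_iff.mpr (by omega)
      · obtain ⟨j, hj, hji⟩ := Finset.not_subset.mp hS
        rw [Finset.mem_singleton] at hji
        exact Or.inr ⟨j, hj, le_of_eq (twoTop_top_ne hji).symm⟩
  -- the manipulated outcome is at least p_{N\i}
  have hfP' : ∀ Q : Profile n (Alt a b),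
      Q i = mkL (p (Finset.univ.erase i)) (p (Finset.univ.erase i)) →
      a + 2 ≤ (gms p Q).val := by
    intro Q hQi
    have h := gms_lower2 hp.2.2 Q i
    rw [hQi, top_mkL] at h
    rcases h with h | h <;> exact le_trans hq (alt_le_iff.mp h)
  have hlt : ∀ Q : Profile n (Alt a b),
      Q i = mkL (p (Finset.univ.erase i)) (p (Finset.univ.erase i)) →
      (mkL aA a1).lt a1 (gms p Q) := by
    intro Q hQi
    have h2 := hfP' Q hQi
    exact mkL_bot_lt hne1 (fun h => by rw [h] at h2; omega)
  apply hNOM i (mkL aA a1) (mkL (p (Finset.univ.erase i)) (p (Finset.univ.erase i)))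
  constructor
  · refine ⟨twoTop i (mkL aA a1) a1, twoTop_same, ?_⟩
    show (mkL aA a1).lt (gms p (twoTop i (mkL aA a1) a1)) _
    rw [hfP, update_twoTop]
    exact hlt _ twoTop_same
  · refine Or.inl ⟨a1, ⟨twoTop i (mkL aA a1) a1, twoTop_same, hfP⟩, ?_⟩
    rintro w' ⟨Q, hQi, rfl⟩
    exact hlt Q hQi

lemma consB {p : Finset (Fin n) → Alt a b} (hp : MonotonicFamily p) (hab : a < b)
    (i : Fin n) (hq : (p (Finset.univ.erase i)).val + 1 ≤ b)
    (hr : (p {i}).val + 2 ≤ b) (hNOM : NOM (gms p)) : False := by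
  obtain ⟨bA, hbA⟩ : ∃ x : Alt a b, x.val = b :=
    ⟨⟨b, Finset.mem_Icc.mpr (by omega)⟩, rfl⟩
  obtain ⟨b1, hb1⟩ : ∃ x : Alt a b, x.val = b - 1 :=
    ⟨⟨b - 1, Finset.mem_Icc.mpr (by omega)⟩, rfl⟩
  have hpu := hp.1
  have hpe := hp.2.1
  have hr' := alt_ge (p {i})
  have hb : 1 ≤ b := by omega
  have hne1 : b1 ≠ bA := fun h => by rw [h] at hb1; omega
  have hfP : gms p (twoTop i (mkL bA b1) b1) = b1 := by
    apply le_antisymm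
    · refine le_trans (gms_le_gterm p _ (Finset.univ.erase i))
        (gterm_le (alt_le_iff.mpr (by omega)) ?_)
      intro j hj
      rw [twoTop_top_ne (Finset.mem_erase.mp hj).1]
    · apply le_gms
      intro S
      rcases S.eq_empty_or_nonempty with rfl | ⟨j, hj⟩
      · left; exact alt_le_iff.mpr (by omega)
      · by_cases hji : j = i
        · subst hji
          refine Or.inr ⟨j, hj, ?_⟩
          rw [twoTop_top_same, top_mkL]
          exact alt_le_iff.mpr (by omega)
        · exact Or.inr ⟨j, hj, le_of_eq (twoTop_top_ne hji).symm⟩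
  have hfP' : ∀ Q : Profile n (Alt a b), Q i = mkL (p {i}) (p {i}) →
      (gms p Q).val ≤ b - 2 := by
    intro Q hQi
    have h := gms_upper2 p Q i
    rw [hQi, top_mkL] at h
    rcases h with h | h <;> exact le_trans (alt_le_iff.mp h) (by omega)
  have hlt : ∀ Q : Profile n (Alt a b), Q i = mkL (p {i}) (p {i}) →
      (mkL bA b1).lt b1 (gms p Q) := by
    intro Q hQi
    have h2 := hfP' Q hQi
    exact mkL_bot_lt hne1 (fun h => by rw [h] at h2; omega)
  apply hNOM i (mkL bA b1) (mkL (p {i}) (p {i}))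
  constructor
  · refine ⟨twoTop i (mkL bA b1) b1, twoTop_same, ?_⟩
    show (mkL bA b1).lt (gms p (twoTop i (mkL bA b1) b1)) _
    rw [hfP, update_twoTop]
    exact hlt _ twoTop_same
  · refine Or.inl ⟨b1, ⟨twoTop i (mkL bA b1) b1, twoTop_same, hfP⟩, ?_⟩
    rintro w' ⟨Q, hQi, rfl⟩
    exact hlt Q hQi

end C

/-- A non-dictatorial generalized median voter scheme is NOM iff for every agent `i`,
`p_{N\{i}} ∈ {a, a+1}` and `p_{{i}} ∈ {b-1, b}`. -/
theorem gms_NOM {n a b : ℕ} [Nonempty (Alt a b)]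
    (hn : 2 ≤ n) (hab : a < b)
    (p : Finset (Fin n) → Alt a b) (hp : MonotonicFamily p)
    (hnd : ¬ Dictatorial (gms p)) :
    NOM (gms p) ↔ ∀ i : Fin n,
      ((p (Finset.univ.erase i)).val = a ∨ (p (Finset.univ.erase i)).val = a + 1) ∧
      ((p {i}).val = b - 1 ∨ (p {i}).val = b) := by
  constructor
  · -- NOM → condition
    intro hNOM i
    have hqa := alt_ge (p (Finset.univ.erase i))
    have hqb := alt_le (p (Finset.univ.erase i))
    have hra := alt_ge (p {i})
    have hrb := alt_le (p {i})
    have claim1 : (p (Finset.univ.erase i)).val ≤ a + 1 := by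
      by_contra hc
      have hq2 : a + 2 ≤ (p (Finset.univ.erase i)).val := by omega
      by_cases hr1 : a + 1 ≤ (p {i}).val
      · exact consA hp hab i hq2 hr1 hNOM
      · have hr0 : (p {i}).val = a := by omega
        by_cases hqb' : (p (Finset.univ.erase i)).val + 1 ≤ b
        · exact consB hp hab i hqb' (by omega) hNOM
        · exact hnd (dict_of_extreme hp i (by omega) hr0)
    have claim2 : b - 1 ≤ (p {i}).val := by
      by_contra hc
      have hr2 : (p {i}).val + 2 ≤ b := by omega
      by_cases hqb' : (p (Finset.univ.erase i)).val + 1 ≤ b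
      · exact consB hp hab i hqb' hr2 hNOM
      · have hqB : (p (Finset.univ.erase i)).val = b := by omega
        by_cases hr1 : a + 1 ≤ (p {i}).val
        · exact consA hp hab i (by omega) hr1 hNOM
        · exact hnd (dict_of_extreme hp i hqB (by omega))
    exact ⟨by omega, by omega⟩
  · -- condition → NOM
    intro hcond i L L' hOM
    obtain ⟨hman, hWB⟩ := hOM
    obtain ⟨hq1, hr1⟩ := hcond i
    have hq : (p (Finset.univ.erase i)).val ≤ a + 1 := by omega
    have hr : b - 1 ≤ (p {i}).val := by rcases hr1 with h | h <;> omega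
    rcases hWB with ⟨w, hwO, hw⟩ | ⟨b', hb'O, hb'⟩
    · obtain ⟨P, hPi, hPw⟩ := hwO
      have hlow := gms_lower2 hp.2.2 P i
      have hupp := gms_upper2 p P i
      rw [hPi, hPw] at hlow hupp
      have hwa := alt_ge w
      have hwb := alt_le w
      by_cases h1 : (p (Finset.univ.erase i)).val ≤ w.val
      · by_cases h2 : w.val ≤ (p {i}).val
        · exact lt_irrefl' L w (hw w (mem_option hp i L' w h1 h2))
        · -- w.val = b and top L = w
          have htw : top L = w := by
            rcases hupp with h | h
            · rw [alt_le_iff] at h; omega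
            · apply alt_ext
              have h' := alt_le_iff.mp h
              have := alt_le (top L)
              omega
          obtain ⟨w', hw'⟩ : ∃ w', w' ∈ OptionSet (gms p) i L' :=
            ⟨gms p (fun _ => L'), fun _ => L', rfl, rfl⟩
          exact lt_le_absurd L (hw w' hw') (htw ▸ le_top_all L w')
      · -- w.val = a and top L = w
        have htw : top L = w := by
          rcases hlow with h | h
          · rw [alt_le_iff] at h; omega
          · apply alt_ext
            have h' := alt_le_iff.mp h
            have := alt_ge (top L)
            omega
        obtain ⟨w', hw'⟩ : ∃ w', w' ∈ OptionSet (gms p) i L' :=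
          ⟨gms p (fun _ => L'), fun _ => L', rfl, rfl⟩
        exact lt_le_absurd L (hw w' hw') (htw ▸ le_top_all L w')
    · exact lt_le_absurd L (hb' (top L) (top_mem_option hp i L)) (le_top_all L b')
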